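/- There exists, for every d ≥ 2, a (d+1)-dimensional banner simplicial complex supporting a nontrivial (d-1)-dimensional homology cycle but having only d + 3 vertices; namely, the boundary of a d-simplex with one facet joined to an external edge. -/

import Mathlib

open Finset

/-- An abstract simplicial complex on a finite linearly ordered vertex set `V`
(containing the empty face). -/
structure SComplex (V : Type) [Fintype V] [LinearOrder V] where
  faces : Set (Finset V)
  empty_mem : (∅ : Finset V) ∈ faces
  down_closed : ∀ ⦃F G : Finset V⦄, F ∈ faces → G ⊆ F → G ∈ faces

namespace SComplex

variable {V : Type} [Fintype V] [LinearOrder V]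

/-- Faces of cardinality `j`. -/
def simplex (K : SComplex V) (j : ℕ) := {F : Finset V // F ∈ K.faces ∧ F.card = j}

/-- Simplicial chains supported on faces of cardinality `j` (so `j = n + 1` gives the
`n`-dimensional chains, and `j = 0` corresponds to the empty face, yielding
*reduced* homology below). -/
abbrev chains (R : Type) [CommRing R] (K : SComplex V) (j : ℕ) := K.simplex j →₀ R

/-- The simplicial boundary map, from chains on faces of cardinality `j + 1`
to chains on faces of cardinality `j`. -/
noncomputable def bdry (R : Type) [CommRing R] (K : SComplex V) (j : ℕ) :
    K.chains R (j + 1) →ₗ[R] K.chains R j :=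
  Finsupp.lsum R fun s => LinearMap.toSpanSingleton R _
    (∑ v ∈ s.1.attach, ((-1 : R) ^ ((s.1.filter (· < v.1)).card)) •
      Finsupp.single (⟨s.1.erase v.1, K.down_closed s.2.1 (Finset.erase_subset _ _),
        by simp [Finset.card_erase_of_mem v.2, s.2.2]⟩ : K.simplex j) (1 : R))

/-- Reduced `n`-cycles (chains on faces of cardinality `n + 1` with zero boundary). -/
noncomputable def cycles (R : Type) [CommRing R] (K : SComplex V) (n : ℕ) :
    Submodule R (K.chains R (n + 1)) := LinearMap.ker (K.bdry R n)

/-- Reduced `n`-boundaries. -/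
noncomputable def bdries (R : Type) [CommRing R] (K : SComplex V) (n : ℕ) :
    Submodule R (K.chains R (n + 1)) := LinearMap.range (K.bdry R (n + 1))

/-- Reduced simplicial homology of `K` in dimension `n` with coefficients in `R`,
realized as the image of the cycles in the chains modulo the boundaries. -/
noncomputable abbrev Hred (R : Type) [CommRing R] (K : SComplex V) (n : ℕ) :=
  ↥(Submodule.map (K.bdries R n).mkQ (K.cycles R n))

/-- The induced subcomplex on a vertex subset `W`. -/
def induced (K : SComplex V) (W : Finset V) : SComplex V where
  faces := {F | F ∈ K.faces ∧ F ⊆ W}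
  empty_mem := ⟨K.empty_mem, Finset.empty_subset _⟩
  down_closed := fun _ _ hF hG => ⟨K.down_closed hF.1 hG, hG.trans hF.2⟩

/-- The underlying graph (1-skeleton) of a simplicial complex. -/
def skeleton (K : SComplex V) : SimpleGraph V where
  Adj u v := u ≠ v ∧ ({u, v} : Finset V) ∈ K.faces
  symm := ⟨by
    intro u v h
    refine ⟨h.1.symm, ?_⟩
    rw [Finset.pair_comm]
    exact h.2⟩
  loopless := ⟨fun v h => h.1 rfl⟩

/-- The vertex set of a simplicial complex. -/
def vertexSet (K : SComplex V) : Set V := {v | {v} ∈ K.faces}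

/-- A set of vertices is complete if its elements are pairwise adjacent. -/
def IsComplete (K : SComplex V) (W : Finset V) : Prop :=
  ∀ u ∈ W, ∀ v ∈ W, u ≠ v → ({u, v} : Finset V) ∈ K.faces

/-- A complex is flag if it is the clique complex of its 1-skeleton. -/
def IsFlag (K : SComplex V) : Prop := ∀ W : Finset V, K.IsComplete W → W ∈ K.faces

/-- One plus the dimension of `K`: the maximal cardinality of a face. -/
noncomputable def dimP1 (K : SComplex V) : ℕ := sSup {j | ∃ F ∈ K.faces, F.card = j}

/-- `K` is pure, with all facets of cardinality `d`. -/
def Pure (K : SComplex V) (d : ℕ) : Prop :=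
  ∀ F ∈ K.faces, ∃ G ∈ K.faces, F ⊆ G ∧ G.card = d

/-- `K` is a minimal `n`-cycle over `R`: it is pure `n`-dimensional and supports
precisely one homology `n`-class (up to scalars), whose support is all of `K`. -/
def IsMinimalCycle (R : Type) [CommRing R] (K : SComplex V) (n : ℕ) : Prop :=
  K.dimP1 = n + 1 ∧ K.Pure (n + 1) ∧
    ∃ ζ ∈ K.cycles R n, (∀ s : K.simplex (n + 1), ζ s ≠ 0) ∧
      ∀ z ∈ K.cycles R n, ∃ c : R, z = c • ζ

end SComplex

/-- Graded Betti numbers of the Stanley–Reisner ring of `K` over `k`, via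
Hochster's formula: `b_{i,j} = ∑_{#W = j} dim_k H̃_{j-i-1}(K_W)`. -/
noncomputable def bettiH (k : Type) [Field k] {V : Type} [Fintype V] [LinearOrder V]
    (K : SComplex V) (i j : ℕ) : ℕ :=
  ∑ W ∈ Finset.powersetCard j (Finset.univ : Finset V),
    Module.finrank k (SComplex.Hred k (K.induced W) (j - i - 1))

/-- A graph is `m`-connected if it has at least `m` vertices and removing
any set of fewer than `m` vertices leaves a connected graph. -/
def KConn {V : Type} [Fintype V] (G : SimpleGraph V) (m : ℕ) : Prop :=
  m ≤ Fintype.card V ∧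
    ∀ S : Finset V, S.card < m → (SimpleGraph.induce ((↑S : Set V)ᶜ) G).Connected

/-- The vertex connectivity of a graph: the largest `m` such that it is `m`-connected. -/
noncomputable def connectivity {V : Type} [Fintype V] (G : SimpleGraph V) : ℕ :=
  sSup {m | KConn G m}


namespace SComplex

variable {V : Type} [Fintype V] [LinearOrder V]

/-- The link of a face `σ` of `K`. -/
def link (K : SComplex V) (s : Finset V) (hs : s ∈ K.faces) : SComplex V where
  faces := {t | t ∩ s = ∅ ∧ t ∪ s ∈ K.faces}
  empty_mem := ⟨Finset.empty_inter s, by simpa using hs⟩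
  down_closed := by
    intro F G hF hG
    constructor
    · rw [← Finset.subset_empty, ← hF.1]
      exact Finset.inter_subset_inter hG (Finset.Subset.refl s)
    · exact K.down_closed hF.2 (Finset.union_subset_union hG (Finset.Subset.refl s))

/-- The degree of a face: the maximal cardinality of a facet containing it. -/
noncomputable def degree (K : SComplex V) (s : Finset V) : ℕ :=
  sSup {j | ∃ F ∈ K.faces, s ⊆ F ∧ F.card = j}

/-- `K` is banner if every critical complete set of size at least `dim K + 1`
is a face of `K`. -/
def IsBanner (K : SComplex V) : Prop :=
  ∀ W : Finset V, K.IsComplete W → (∃ v ∈ W, W.erase v ∈ K.faces) →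
    K.dimP1 ≤ W.card → W ∈ K.faces

/-- `K` is (isomorphic to) the boundary of the 2-simplex. -/
def IsBdTwoSimplex (K : SComplex V) : Prop :=
  ∃ a b c : V, a ≠ b ∧ a ≠ c ∧ b ≠ c ∧
    K.faces = {F | F ⊆ ({a, b, c} : Finset V) ∧ F ≠ ({a, b, c} : Finset V)}

/-- The banner number of `K`: the least `b` such that the link of every face of
cardinality `b` and degree `dim K + 1` is banner or the boundary of the 2-simplex. -/
noncomputable def bannerNumber (K : SComplex V) : ℕ :=
  sInf {b | ∀ s : Finset V, ∀ hs : s ∈ K.faces, s.card = b → K.degree s = K.dimP1 →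
    IsBanner (K.link s hs) ∨ IsBdTwoSimplex (K.link s hs)}

end SComplex


namespace SComplex

variable {V : Type} [Fintype V] [LinearOrder V]

instance {K : SComplex V} {j : ℕ} : DecidableEq (K.simplex j) :=
  fun a b => decidable_of_iff (a.1 = b.1) Subtype.ext_iff.symm

lemma simplex_eq_iff' {K : SComplex V} {j : ℕ} (a b : K.simplex j) : a = b ↔ a.1 = b.1 :=
  Subtype.ext_iff

lemma bdry_single' (R : Type) [CommRing R] (K : SComplex V) (j : ℕ) (s : K.simplex (j + 1)) :
    K.bdry R j (Finsupp.single s 1) =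
      ∑ v ∈ s.1.attach, ((-1 : R) ^ ((s.1.filter (· < v.1)).card)) •
        Finsupp.single (α := K.simplex j) (⟨s.1.erase v.1, K.down_closed s.2.1 (Finset.erase_subset _ _),
          by simp [Finset.card_erase_of_mem v.2, s.2.2]⟩ : K.simplex j) (1 : R) := by
  rw [bdry, Finsupp.lsum_single, LinearMap.toSpanSingleton_apply, one_smul]
  rfl

lemma sign_helper' (R : Type) [CommRing R] {s : Finset V} {u v : V}
    (hu : u ∈ s) (hv : v ∈ s) (hvu : v < u) :
    (-1 : R) ^ ((s.filter (· < v)).card + ((s.erase v).filter (· < u)).card) +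
      (-1 : R) ^ ((s.filter (· < u)).card + ((s.erase u).filter (· < v)).card) = 0 := by
  have h1 : (s.erase v).filter (· < u) = (s.filter (· < u)).erase v :=
    Finset.filter_erase _ v s
  have h2 : (s.erase u).filter (· < v) = s.filter (· < v) := by
    rw [Finset.filter_erase, Finset.erase_eq_of_notMem]
    simp [not_lt.2 hvu.le]
  have hvmem : v ∈ s.filter (· < u) := Finset.mem_filter.2 ⟨hv, hvu⟩
  have h4 : 1 ≤ (s.filter (· < u)).card := Finset.card_pos.2 ⟨v, hvmem⟩
  rw [h1, h2, Finset.card_erase_of_mem hvmem]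
  have h5 : (s.filter (· < u)).card + (s.filter (· < v)).card
      = ((s.filter (· < v)).card + ((s.filter (· < u)).card - 1)) + 1 := by omega
  rw [h5, pow_succ]
  ring

lemma scalar_zero' (R : Type) [CommRing R] (s t : Finset V) :
    ∑ v ∈ s, ∑ u ∈ s.erase v,
      ((-1 : R) ^ ((s.filter (· < v)).card) *
        ((-1 : R) ^ (((s.erase v).filter (· < u)).card) *
          (if (s.erase v).erase u = t then (1 : R) else 0))) = 0 := by
  rw [Finset.sum_sigma' s (fun v => s.erase v)]
  refine Finset.sum_involution (fun p _ => ⟨p.2, p.1⟩) ?_ ?_ ?_ ?_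
  · rintro ⟨v, u⟩ hp
    rw [Finset.mem_sigma] at hp
    obtain ⟨hv, hu'⟩ := hp
    have hune : u ≠ v := (Finset.mem_erase.1 hu').1
    have hu : u ∈ s := (Finset.mem_erase.1 hu').2
    have hδ : (s.erase u).erase v = (s.erase v).erase u := Finset.erase_right_comm
    dsimp only
    rw [hδ]
    split_ifs with h
    · rw [mul_one, mul_one, ← pow_add, ← pow_add]
      rcases lt_or_gt_of_ne hune with hlt | hlt
      · exact add_comm ((-1 : R) ^ _) _ ▸ sign_helper' R hv hu hlt
      · exact sign_helper' R hu hv hlt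
    · simp
  · rintro ⟨v, u⟩ hp _
    rw [Finset.mem_sigma] at hp
    intro h
    exact (Finset.mem_erase.1 hp.2).1 (congrArg Sigma.fst h)
  · rintro ⟨v, u⟩ hp
    rw [Finset.mem_sigma] at hp ⊢
    exact ⟨(Finset.mem_erase.1 hp.2).2,
      Finset.mem_erase.2 ⟨fun h => (Finset.mem_erase.1 hp.2).1 h.symm, hp.1⟩⟩
  · rintro ⟨v, u⟩ _
    rfl

lemma bdry_single_apply (R : Type) [CommRing R] (K : SComplex V) (j : ℕ)
    (s : K.simplex (j + 1)) (t : K.simplex j) :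
    K.bdry R j (Finsupp.single s 1) t =
      ∑ v ∈ s.1, ((-1 : R) ^ ((s.1.filter (· < v)).card)) *
        (if s.1.erase v = t.1 then (1 : R) else 0) := by
  rw [bdry_single', Finsupp.finset_sum_apply]
  simp only [Finsupp.smul_apply, smul_eq_mul]
  refine (Finset.sum_congr rfl (fun x _ => congrArg _ ((Finsupp.single_apply (α := K.simplex j)).trans
    (if_congr (simplex_eq_iff' _ _) rfl rfl)))).trans ?_
  exact Finset.sum_attach s.1 (fun x => (-1 : R) ^ ((s.1.filter (· < x)).card) *
    if s.1.erase x = t.1 then (1 : R) else 0)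

lemma erase_face_of (K : SComplex V) {s : Finset V} (h : ∀ G : Finset V, G ⊂ s → G ∈ K.faces) :
    ∀ v ∈ s, s.erase v ∈ K.faces := fun v hv => h _ (Finset.erase_ssubset hv)

lemma mem_cycles' (R : Type) [CommRing R] (K : SComplex V) (n : ℕ) (s : Finset V)
    (hs : s.card = n + 2) (hf : ∀ v ∈ s, s.erase v ∈ K.faces) :
    (∑ v ∈ s.attach, ((-1 : R) ^ ((s.filter (· < v.1)).card)) •
      Finsupp.single (α := K.simplex (n + 1)) (⟨s.erase v.1, hf v.1 v.2,
        by simp [Finset.card_erase_of_mem v.2, hs]⟩ : K.simplex (n + 1)) (1 : R))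
      ∈ K.cycles R n := by
  rw [cycles, LinearMap.mem_ker, map_sum]
  ext t
  simp only [map_smul, Finsupp.finset_sum_apply, Finsupp.smul_apply,
    smul_eq_mul, Finsupp.coe_zero, Pi.zero_apply]
  refine Eq.trans (Finset.sum_congr rfl (fun (x : {v // v ∈ s}) _ =>
    congrArg (fun r => (-1 : R) ^ ((s.filter (· < x.1)).card) * r)
      (bdry_single_apply R K n _ t))) ?_
  refine Eq.trans (Finset.sum_attach s (fun v => (-1 : R) ^ ((s.filter (· < v)).card) *
    ∑ u ∈ s.erase v, ((-1 : R) ^ (((s.erase v).filter (· < u)).card) *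
      (if (s.erase v).erase u = t.1 then (1 : R) else 0)))) ?_
  refine Eq.trans (Finset.sum_congr rfl (fun v _ => Finset.mul_sum _ _ _)) ?_
  exact scalar_zero' R s t.1

lemma eval_cycle (R : Type) [CommRing R] (K : SComplex V) (n : ℕ) (s : Finset V)
    (hs : s.card = n + 2) (hf : ∀ v ∈ s, s.erase v ∈ K.faces)
    (x : V) (hx : x ∈ s) (t : K.simplex (n + 1)) (ht : t.1 = s.erase x) :
    (∑ v ∈ s.attach, ((-1 : R) ^ ((s.filter (· < v.1)).card)) •
      Finsupp.single (α := K.simplex (n + 1)) (⟨s.erase v.1, hf v.1 v.2,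
        by simp [Finset.card_erase_of_mem v.2, hs]⟩ : K.simplex (n + 1)) (1 : R)) t
      = (-1 : R) ^ ((s.filter (· < x)).card) := by
  classical
  rw [Finsupp.finset_sum_apply]
  simp only [Finsupp.smul_apply, smul_eq_mul]
  refine (Finset.sum_congr rfl (fun x _ => congrArg _ ((Finsupp.single_apply).trans
    (if_congr Subtype.ext_iff rfl rfl)))).trans ?_
  refine Eq.trans (Finset.sum_attach s (fun v => (-1 : R) ^ ((s.filter (· < v)).card) *
    (if s.erase v = t.1 then (1 : R) else 0))) ?_
  simp only [mul_ite, mul_one, mul_zero]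
  refine Eq.trans (Finset.sum_eq_single_of_mem x hx (fun b hb hbx =>
    if_neg (fun hEq => hbx ((Finset.erase_inj s hb).1 (hEq.trans ht))))) (if_pos ht.symm)

lemma bdry_apply_zero (R : Type) [CommRing R] (K : SComplex V) (n : ℕ) (t : K.simplex (n + 1))
    (x : V) (hx : x ∈ t.1) (h : ∀ F ∈ K.faces, F.card = n + 2 → x ∉ F)
    (z : K.chains R (n + 2)) :
    K.bdry R (n + 1) z t = 0 := by
  induction z using Finsupp.induction_linear with
  | zero => simp
  | add f g hf hg => rw [map_add, Finsupp.add_apply, hf, hg, add_zero]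
  | single a b =>
    rw [← Finsupp.smul_single_one, map_smul, Finsupp.smul_apply, bdry_single_apply, smul_eq_mul]
    rw [Finset.sum_eq_zero, mul_zero]
    intro u hu
    rw [if_neg, mul_zero]
    intro hEq
    exact h a.1 a.2.1 a.2.2 (Finset.erase_subset _ _ (hEq ▸ hx))

end SComplex

section Construction

def vA (m : ℕ) : Fin (m + 3) := ⟨m + 1, by omega⟩
def vB (m : ℕ) : Fin (m + 3) := ⟨m + 2, by omega⟩
def s0 (m : ℕ) : Finset (Fin (m + 3)) := Finset.univ \ {vA m, vB m}
def s1 (m : ℕ) : Finset (Fin (m + 3)) := Finset.univ.erase 0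

lemma mem_s0 {m : ℕ} {x : Fin (m + 3)} : x ∈ s0 m ↔ x.val ≤ m := by
  simp only [s0, vA, vB, Finset.mem_sdiff, Finset.mem_univ, true_and, Finset.mem_insert,
    Finset.mem_singleton, Fin.ext_iff]
  omega

lemma mem_s1 {m : ℕ} {x : Fin (m + 3)} : x ∈ s1 m ↔ x ≠ 0 := by
  simp [s1]

lemma card_s0 (m : ℕ) : (s0 m).card = m + 1 := by
  have hab : ({vA m, vB m} : Finset (Fin (m + 3))).card = 2 := by
    rw [Finset.card_pair]
    simp [vA, vB, Fin.ext_iff]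
  rw [s0, Finset.card_sdiff_of_subset (Finset.subset_univ _), hab, Finset.card_univ, Fintype.card_fin]
  omega

lemma card_s1 (m : ℕ) : (s1 m).card = m + 2 := by
  rw [s1, Finset.card_erase_of_mem (Finset.mem_univ _), Finset.card_univ, Fintype.card_fin]
  omega

def myK (m : ℕ) : SComplex (Fin (m + 3)) where
  faces := {F | F ⊂ s0 m ∨ F ⊆ s1 m}
  empty_mem := Or.inr (Finset.empty_subset _)
  down_closed := fun F G hF hG =>
    hF.elim (fun h => Or.inl (hG.trans_ssubset h)) (fun h => Or.inr (hG.trans h))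

lemma myK_faces {m : ℕ} {F : Finset (Fin (m + 3))} :
    F ∈ (myK m).faces ↔ F ⊂ s0 m ∨ F ⊆ s1 m := Iff.rfl

lemma dimP1_myK (m : ℕ) : (myK m).dimP1 = m + 2 := by
  have hub : ∀ j ∈ {j | ∃ F ∈ (myK m).faces, F.card = j}, j ≤ m + 2 := by
    rintro j ⟨F, hF, rfl⟩
    rcases hF with h | h
    · have := Finset.card_le_card h.subset
      rw [card_s0] at this
      omega
    · have := Finset.card_le_card h
      rw [card_s1] at this
      omega
  have hmem : m + 2 ∈ {j | ∃ F ∈ (myK m).faces, F.card = j} :=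
    ⟨s1 m, Or.inr Finset.Subset.rfl, card_s1 m⟩
  have hne : {j | ∃ F ∈ (myK m).faces, F.card = j}.Nonempty := ⟨m + 2, hmem⟩
  have hbdd : BddAbove {j | ∃ F ∈ (myK m).faces, F.card = j} := ⟨m + 2, hub⟩
  exact le_antisymm (csSup_le hne hub) (le_csSup hbdd hmem)

lemma banner_myK (m : ℕ) : (myK m).IsBanner := by
  intro W hcomp _ hcard
  rw [dimP1_myK] at hcard
  have h0 : (0 : Fin (m + 3)) ∉ W := by
    intro h0
    have hab : vA m ∈ W ∨ vB m ∈ W := by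
      by_contra hab
      push_neg at hab
      have hsub : W ⊆ s0 m := by
        intro x hx
        rw [mem_s0]
        by_contra hgt
        push_neg at hgt
        have h3 := x.isLt
        have hvax : x = vA m ∨ x = vB m := by
          rcases Nat.lt_or_ge x.val (m + 2) with hlt | hge
          · exact Or.inl (Fin.ext (show x.val = m + 1 by omega))
          · exact Or.inr (Fin.ext (show x.val = m + 2 by omega))
        rcases hvax with hvax | hvax
        · exact hab.1 (hvax ▸ hx)
        · exact hab.2 (hvax ▸ hx)
      have := Finset.card_le_card hsub
      rw [card_s0] at this
      omega
    obtain ⟨x, hxW, hxval⟩ : ∃ x, x ∈ W ∧ m + 1 ≤ x.val := by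
      rcases hab with h | h
      · exact ⟨vA m, h, le_refl _⟩
      · exact ⟨vB m, h, Nat.le_succ (m + 1)⟩
    have hxne : (0 : Fin (m + 3)) ≠ x := by
      intro h
      have h' := congrArg Fin.val h
      rw [Fin.val_zero] at h'
      omega
    have hface := hcomp 0 h0 x hxW hxne
    rcases hface with h | h
    · have hxs0 : x ∈ s0 m := h.subset (by simp)
      rw [mem_s0] at hxs0
      omega
    · have h0s1 : (0 : Fin (m + 3)) ∈ s1 m := h (by simp)
      rw [mem_s1] at h0s1
      exact h0s1 rfl
  refine Or.inr (fun x hx => ?_)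
  rw [mem_s1]
  intro hx0
  exact h0 (hx0 ▸ hx)

lemma vertex_myK (m : ℕ) (hm : 1 ≤ m) (v : Fin (m + 3)) :
    ({v} : Finset (Fin (m + 3))) ∈ (myK m).faces := by
  rw [myK_faces]
  by_cases hv : v = 0
  · refine Or.inl (lt_iff_le_and_ne.2 ⟨Finset.singleton_subset_iff.2 ?_, fun hEq => ?_⟩)
    · rw [hv, mem_s0]
      simp
    · have := congrArg Finset.card hEq
      rw [card_s0, Finset.card_singleton] at this
      omega
  · exact Or.inr (Finset.singleton_subset_iff.2 (mem_s1.2 hv))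

end Construction

/-- For every `d ≥ 2` there is a `(d+1)`-dimensional banner simplicial complex on
only `d + 3` vertices supporting a nontrivial `(d-1)`-dimensional homology cycle. -/
theorem stmt18 (k : Type) [Field k] (d : ℕ) (hd : 2 ≤ d) :
    ∃ K : SComplex (Fin (d + 3)), K.dimP1 = d + 2 ∧ K.IsBanner ∧
      (∀ v : Fin (d + 3), ({v} : Finset (Fin (d + 3))) ∈ K.faces) ∧
      Nontrivial (SComplex.Hred k K (d - 1)) := by
  obtain ⟨e, rfl⟩ : ∃ e, d = e + 2 := ⟨d - 2, by omega⟩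
  refine ⟨myK (e + 2), dimP1_myK (e + 2), banner_myK (e + 2), vertex_myK (e + 2) (by omega), ?_⟩
  have hcard : (s0 (e + 2)).card = (e + 1) + 2 := by rw [card_s0]
  have hface0 : ∀ G : Finset (Fin (e + 2 + 3)), G ⊂ s0 (e + 2) → G ∈ (myK (e + 2)).faces :=
    fun G hG => Or.inl hG
  have hcyc := SComplex.mem_cycles' k (myK (e + 2)) (e + 1) (s0 (e + 2)) hcard
    (SComplex.erase_face_of (myK (e + 2)) hface0)
  have hx1 : (⟨1, by omega⟩ : Fin (e + 2 + 3)) ∈ s0 (e + 2) :=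
    mem_s0.2 (by show 1 ≤ e + 2; omega)
  have hT2 : ((s0 (e + 2)).erase (⟨1, by omega⟩ : Fin (e + 2 + 3))).card = e + 2 := by
    rw [Finset.card_erase_of_mem hx1, card_s0]
    omega

  have hTface : (s0 (e + 2)).erase (⟨1, by omega⟩ : Fin (e + 2 + 3)) ∈ (myK (e + 2)).faces :=
    hface0 _ (Finset.erase_ssubset hx1)
  have hval := SComplex.eval_cycle k (myK (e + 2)) (e + 1) (s0 (e + 2)) hcard
    (SComplex.erase_face_of (myK (e + 2)) hface0) ⟨1, by omega⟩ hx1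
    ⟨(s0 (e + 2)).erase ⟨1, by omega⟩, hTface, hT2⟩
    (by ext y; simp [Finset.mem_erase])
  have h0T : (0 : Fin (e + 2 + 3)) ∈ ((s0 (e + 2)).erase (⟨1, by omega⟩ : Fin (e + 2 + 3))) := by
    refine Finset.mem_erase.2 ⟨?_, mem_s0.2 (by simp)⟩
    simp [Fin.ext_iff]
  have hno : ∀ F ∈ (myK (e + 2)).faces, F.card = (e + 1) + 2 → (0 : Fin (e + 2 + 3)) ∉ F := by
    intro F hF hcF h0F
    rcases hF with h | h
    · have := Finset.card_lt_card h
      rw [card_s0] at this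
      omega
    · exact (Finset.mem_erase.1 (h h0F)).1 rfl
  have hzero := SComplex.bdry_apply_zero k (myK (e + 2)) (e + 1)
    ⟨(s0 (e + 2)).erase ⟨1, by omega⟩, hTface, hT2⟩
    (0 : Fin (e + 2 + 3)) h0T hno
  refine ⟨⟨⟨_, Submodule.mem_map_of_mem hcyc⟩, 0, fun hEq => ?_⟩⟩
  rw [Submodule.mk_eq_zero] at hEq
  erw [Submodule.mkQ_apply, Submodule.Quotient.mk_eq_zero] at hEq
  rw [SComplex.bdries, LinearMap.mem_range] at hEq
  obtain ⟨z, hz⟩ := hEq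
  have hzz := DFunLike.congr_fun hz.symm
    (⟨(s0 (e + 2)).erase ⟨1, by omega⟩, hTface, hT2⟩ :
      (myK (e + 2)).simplex (e + 2))
  exact pow_ne_zero _ (neg_ne_zero.2 (one_ne_zero)) (hval.symm.trans (hzz.trans (hzero z)))
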